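/- Let Ω ⊆ ℝ² be open and connected, let u, v, P : Ω → ℝ be continuously differentiable and satisfy the steady Euler equations on Ω, let ψ : Ω → ℝ be differentiable with ∂_x ψ = −v and ∂_y ψ = u on Ω, and let γ : ℝ → ℝ be continuous such that ∂_y u − ∂_x v = γ(−ψ) on Ω. Then the energy E(x,y) := P(x,y) + (u(x,y)² + v(x,y)²)/2 + g·y − ∫_0^{ψ(x,y)} γ(−s) ds is constant on Ω. -/

import Mathlib

open Real Set Topology Filter

/-- Partial derivative in the first (horizontal) variable. -/
noncomputable def pdx (f : ℝ × ℝ → ℝ) (z : ℝ × ℝ) : ℝ :=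
  fderiv ℝ f z (1, 0)

/-- Partial derivative in the second (vertical) variable. -/
noncomputable def pdy (f : ℝ × ℝ → ℝ) (z : ℝ × ℝ) : ℝ :=
  fderiv ℝ f z (0, 1)

/-- If (u,v,P) is a C¹ solution of the steady Euler equations on an open
connected set Ω, ψ is a stream function (∂_x ψ = -v, ∂_y ψ = u), and the
vorticity satisfies ∂_y u − ∂_x v = γ(−ψ) for a continuous γ, then the energy
E = P + (u² + v²)/2 + g·y − ∫_0^ψ γ(−s) ds is constant on Ω. -/
theorem energy_is_constant
    (Ω : Set (ℝ × ℝ)) (hΩ : IsOpen Ω) (hconn : IsConnected Ω) (g : ℝ)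
    (u v P ψ : ℝ × ℝ → ℝ) (γ : ℝ → ℝ)
    (hu : ContDiffOn ℝ 1 u Ω) (hv : ContDiffOn ℝ 1 v Ω) (hP : ContDiffOn ℝ 1 P Ω)
    (hψ : DifferentiableOn ℝ ψ Ω)
    (hψx : ∀ z ∈ Ω, pdx ψ z = -v z) (hψy : ∀ z ∈ Ω, pdy ψ z = u z)
    (hγ : Continuous γ)
    (hvort : ∀ z ∈ Ω, pdy u z - pdx v z = γ (-ψ z))
    (euler₁ : ∀ z ∈ Ω, u z * pdx u z + v z * pdy u z = -(pdx P z))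
    (euler₂ : ∀ z ∈ Ω, u z * pdx v z + v z * pdy v z = -(pdy P z) - g)
    (incompressible : ∀ z ∈ Ω, pdx u z + pdy v z = 0) :
    ∀ z ∈ Ω, ∀ w ∈ Ω,
      P z + (u z ^ 2 + v z ^ 2) / 2 + g * z.2 - (∫ s in (0:ℝ)..(ψ z), γ (-s))
        = P w + (u w ^ 2 + v w ^ 2) / 2 + g * w.2 - ∫ s in (0:ℝ)..(ψ w), γ (-s) := by
  set E : ℝ × ℝ → ℝ := fun z =>
    P z + (u z ^ 2 + v z ^ 2) / 2 + g * z.2 - ∫ s in (0:ℝ)..(ψ z), γ (-s) with hE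
  have hγ' : Continuous fun s : ℝ => γ (-s) := hγ.comp continuous_neg
  have key : ∀ z ∈ Ω, HasFDerivAt E (0 : ℝ × ℝ →L[ℝ] ℝ) z := by
    intro z hz
    have hmem := hΩ.mem_nhds hz
    have hud : DifferentiableAt ℝ u z :=
      ((hu.differentiableOn one_ne_zero) z hz).differentiableAt hmem
    have hvd : DifferentiableAt ℝ v z :=
      ((hv.differentiableOn one_ne_zero) z hz).differentiableAt hmem
    have hPd : DifferentiableAt ℝ P z :=
      ((hP.differentiableOn one_ne_zero) z hz).differentiableAt hmem
    have hψd : DifferentiableAt ℝ ψ z := (hψ z hz).differentiableAt hmem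
    have hGψ : HasFDerivAt (fun w => ∫ s in (0:ℝ)..(ψ w), γ (-s))
        (γ (-ψ z) • fderiv ℝ ψ z) z :=
      ((hγ'.integral_hasStrictDerivAt 0 (ψ z)).hasDerivAt).comp_hasFDerivAt z hψd.hasFDerivAt
    have hsnd : HasFDerivAt (fun w : ℝ × ℝ => g * w.2)
        (g • ContinuousLinearMap.snd ℝ ℝ ℝ) z := (hasFDerivAt_snd).const_mul g
    have h2 : HasFDerivAt (fun w => (u w ^ 2 + v w ^ 2) / 2)
        (u z • fderiv ℝ u z + v z • fderiv ℝ v z) z := by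
      have hfun : (fun w => (u w ^ 2 + v w ^ 2) / 2)
          = fun w => (u w * u w + v w * v w) * (1 / 2) := by funext w; ring
      rw [hfun]
      have h := ((hud.hasFDerivAt.mul hud.hasFDerivAt).add
        (hvd.hasFDerivAt.mul hvd.hasFDerivAt)).mul_const (1 / 2 : ℝ)
      refine h.congr_fderiv ?_
      refine ContinuousLinearMap.ext fun q => ?_
      simp [ContinuousLinearMap.smul_apply, smul_eq_mul]
      ring
    have hEd : HasFDerivAt E
        ((fderiv ℝ P z + (u z • fderiv ℝ u z + v z • fderiv ℝ v z)
          + g • ContinuousLinearMap.snd ℝ ℝ ℝ)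
          - γ (-ψ z) • fderiv ℝ ψ z) z :=
      ((hPd.hasFDerivAt.add h2).add hsnd).sub hGψ
    convert hEd using 1
    have hex := euler₁ z hz
    have hey := euler₂ z hz
    have hvo := hvort z hz
    have hpx := hψx z hz
    have hpy := hψy z hz
    simp only [pdx, pdy] at hex hey hvo hpx hpy
    refine Eq.symm (ContinuousLinearMap.ext fun p => ?_)
    have hp : (p : ℝ × ℝ) = p.1 • ((1:ℝ), (0:ℝ)) + p.2 • ((0:ℝ), (1:ℝ)) := by
      ext <;> simp
    rw [hp]
    simp only [map_add, map_smul, ContinuousLinearMap.add_apply,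
      ContinuousLinearMap.coe_smul', Pi.smul_apply, ContinuousLinearMap.sub_apply,
      ContinuousLinearMap.zero_apply, ContinuousLinearMap.coe_snd', smul_eq_mul]
    have e1 : fderiv ℝ P z (1, 0)
        + (u z * fderiv ℝ u z (1, 0) + v z * fderiv ℝ v z (1, 0))
        + g * (0:ℝ) - γ (-ψ z) * fderiv ℝ ψ z (1, 0) = 0 := by
      rw [hpx]; linear_combination hex - v z * hvo
    have e2 : fderiv ℝ P z (0, 1)
        + (u z * fderiv ℝ u z (0, 1) + v z * fderiv ℝ v z (0, 1))
        + g * (1:ℝ) - γ (-ψ z) * fderiv ℝ ψ z (0, 1) = 0 := by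
      rw [hpy]; linear_combination hey + u z * hvo
    linear_combination p.1 * e1 + p.2 * e2
  -- E is locally constant on Ω, hence constant
  haveI := Subtype.preconnectedSpace hconn.isPreconnected
  have hloc : IsLocallyConstant fun p : Ω => E (p : ℝ × ℝ) := by
    rw [IsLocallyConstant.iff_eventually_eq]
    rintro ⟨z, hz⟩
    obtain ⟨ε, hε, hball⟩ := Metric.isOpen_iff.1 hΩ z hz
    have hconst : ∀ y ∈ Metric.ball z ε, E y = E z := by
      intro y hy
      refine (convex_ball z ε).is_const_of_fderivWithin_eq_zero
        (fun x hx => ((key x (hball hx)).differentiableAt).differentiableWithinAt)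
        (fun x hx => ?_) hy (Metric.mem_ball_self hε)
      rw [fderivWithin_of_isOpen Metric.isOpen_ball hx]
      exact (key x (hball hx)).fderiv
    have h2 : (fun p : Ω => (p : ℝ × ℝ)) ⁻¹' Metric.ball z ε ∈ 𝓝 (⟨z, hz⟩ : Ω) :=
      continuous_subtype_val.continuousAt.preimage_mem_nhds (Metric.ball_mem_nhds z hε)
    filter_upwards [h2] with p hp using hconst p hp
  intro z hz w hw
  exact hloc.apply_eq_of_preconnectedSpace ⟨z, hz⟩ ⟨w, hw⟩
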